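/- arXiv:2008.09051 — 2 statements merged into one kernel-verified Lean document; each statement's English description precedes it below -/
import Mathlib

section
/- Let n, k be integers with n > 2k and k ≥ 1, and let i, j be integers with 0 ≤ i < j < k. Then the graphs G_i(n,k) and G_j(n,k) are not isomorphic. -/
/-- The involution on `ℕ` swapping `2j ↔ 2j+1` for `j < i`. -/
def sigmaNat (i : ℕ) (x : ℕ) : ℕ :=
  if x < 2 * i then (if x % 2 = 0 then x + 1 else x - 1) else x

lemma sigmaNat_invol (i : ℕ) : Function.Involutive (sigmaNat i) := by
  intro x; unfold sigmaNat; split_ifs <;> omega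

/-- `sigmaNat` restricted to `Fin n` (the identity in the out-of-range degenerate case,
which never occurs when `2 * i ≤ n`). -/
def sigmaFinFun (n i : ℕ) (x : Fin n) : Fin n :=
  if h : sigmaNat i x.val < n then ⟨sigmaNat i x.val, h⟩ else x

lemma sigmaFinFun_invol (n i : ℕ) : Function.Involutive (sigmaFinFun n i) := by
  intro x
  unfold sigmaFinFun
  by_cases h : sigmaNat i x.val < n
  · rw [dif_pos h]
    have h2 : sigmaNat i ((⟨sigmaNat i x.val, h⟩ : Fin n) : ℕ) < n := by
      show sigmaNat i (sigmaNat i x.val) < n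
      rw [sigmaNat_invol]; exact x.isLt
    rw [dif_pos h2]
    ext
    exact sigmaNat_invol i x.val
  · rw [dif_neg h, dif_neg h]

/-- The permutation `σ_i = (1 2)(3 4)⋯(2i-1 2i)` of `[n]`, in `0`-indexed form on `Fin n`:
it swaps `2j ↔ 2j+1` for `j < i` and fixes everything else (assuming `2 * i ≤ n`). -/
def sigmaPerm (n i : ℕ) : Equiv.Perm (Fin n) :=
  Function.Involutive.toPerm _ (sigmaFinFun_invol n i)

/-- The graph `G_i(n,k)`: vertices are the `k`-subsets of `[n]`, with `v` adjacent to `w`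
iff `v ∩ σ_i(w) = ∅`. -/
def GGraph (n k i : ℕ) : SimpleGraph {s : Finset (Fin n) // s.card = k} where
  Adj v w := v ≠ w ∧ Disjoint v.1 (w.1.image (sigmaPerm n i))
  symm := ⟨by
    rintro v w ⟨h1, h2⟩
    refine ⟨h1.symm, ?_⟩
    rw [Finset.disjoint_left] at h2 ⊢
    intro a haw hav
    rcases Finset.mem_image.mp hav with ⟨b, hbv, hba⟩
    refine h2 hbv (Finset.mem_image.mpr ⟨a, haw, ?_⟩)
    rw [← hba]
    exact (sigmaFinFun_invol n i) b⟩
  loopless := ⟨fun _ h => h.1 rfl⟩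


open Finset

abbrev KV (n k : ℕ) := {s : Finset (Fin n) // s.card = k}

variable {n k : ℕ}

/-- The map on `k`-subsets induced by a permutation of the ground set. -/
def pV (π : Equiv.Perm (Fin n)) (v : KV n k) : KV n k :=
  ⟨v.1.image π, by rw [Finset.card_image_of_injective _ π.injective]; exact v.2⟩

lemma pV_pV (π ρ : Equiv.Perm (Fin n)) (v : KV n k) :
    pV π (pV ρ v) = pV (π * ρ) v := by
  apply Subtype.ext
  show (v.1.image _).image _ = _
  rw [Finset.image_image]
  rfl

lemma pV_symm_pV (π : Equiv.Perm (Fin n)) (v : KV n k) : pV π.symm (pV π v) = v := by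
  rw [pV_pV]
  apply Subtype.ext
  show v.1.image _ = v.1
  have : ⇑(π.symm * π) = id := by funext x; simp
  rw [this, Finset.image_id]

lemma pV_pV_symm (π : Equiv.Perm (Fin n)) (v : KV n k) : pV π (pV π.symm v) = v := by
  have := pV_symm_pV π.symm v; rwa [Equiv.symm_symm] at this

/-- `pV` as an equivalence. -/
def pEquiv (π : Equiv.Perm (Fin n)) : KV n k ≃ KV n k where
  toFun := pV π
  invFun := pV π.symm
  left_inv := pV_symm_pV π
  right_inv := pV_pV_symm π

/-- Walk counts in the "disjointness" (Kneser) structure: `dW L v w` is the number of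
sequences `v = x₀, x₁, …, x_L = w` with consecutive sets disjoint. -/
def dW (n k : ℕ) : ℕ → KV n k → KV n k → ℕ
  | 0, v, w => if v = w then 1 else 0
  | (L+1), v, w => ∑ x : KV n k, dW n k L v x * (if Disjoint x.1 w.1 then 1 else 0)

lemma dW_succ (L : ℕ) (v w : KV n k) :
    dW n k (L+1) v w = ∑ x : KV n k, dW n k L v x * (if Disjoint x.1 w.1 then 1 else 0) := rfl

lemma pV_injective (π : Equiv.Perm (Fin n)) : Function.Injective (pV (k := k) π) :=
  Function.LeftInverse.injective (pV_symm_pV π)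

lemma disjoint_pV (π : Equiv.Perm (Fin n)) (v w : KV n k) :
    Disjoint (pV π v).1 (pV π w).1 ↔ Disjoint v.1 w.1 :=
  Finset.disjoint_image π.injective

/-- Walk counts are invariant under permutations of the ground set. -/
lemma dW_perm (π : Equiv.Perm (Fin n)) (L : ℕ) (v w : KV n k) :
    dW n k L (pV π v) (pV π w) = dW n k L v w := by
  induction L generalizing v w with
  | zero =>
    show (if _ = _ then _ else _) = _
    rw [if_congr ⟨fun h => pV_injective π h, fun h => by rw [h]⟩ rfl rfl]
    rfl
  | succ L ih =>
    rw [dW_succ, dW_succ]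
    rw [← Equiv.sum_comp (pEquiv π)]
    refine Finset.sum_congr rfl fun y _ => ?_
    show dW n k L (pV π v) (pV π y) * (if Disjoint (pV π y).1 (pV π w).1 then 1 else 0) = _
    rw [ih, if_congr (disjoint_pV π y w) rfl rfl]

section Tau

variable {α : Type*} [DecidableEq α]

lemma image_swap_of_mem {a b : α} {s : Finset α} (ha : a ∉ s) (hb : b ∈ s) :
    s.image (Equiv.swap a b) = insert a (s.erase b) := by
  ext x
  simp only [Finset.mem_image, Finset.mem_insert, Finset.mem_erase]
  constructor
  · rintro ⟨y, hy, hxy⟩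
    by_cases hya : y = a
    · exact absurd (hya ▸ hy) ha
    by_cases hyb : y = b
    · left; rw [← hxy, hyb, Equiv.swap_apply_right]
    · right
      rw [Equiv.swap_apply_of_ne_of_ne hya hyb] at hxy
      rw [← hxy]; exact ⟨hyb, hy⟩
  · rintro (h | ⟨hxb, hxs⟩)
    · exact ⟨b, hb, (Equiv.swap_apply_right a b).trans h.symm⟩
    · refine ⟨x, hxs, ?_⟩
      by_cases hxa : x = a
      · exact absurd (hxa ▸ hxs) ha
      · exact Equiv.swap_apply_of_ne_of_ne hxa hxb

lemma image_swap_of_not_mem {a b : α} {s : Finset α} (ha : a ∉ s) (hb : b ∉ s) :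
    s.image (Equiv.swap a b) = s := by
  have h : ∀ x ∈ s, Equiv.swap a b x = x := by
    intro x hx
    exact Equiv.swap_apply_of_ne_of_ne (fun h => ha (h ▸ hx)) fun h => hb (h ▸ hx)
  calc s.image (Equiv.swap a b) = s.image id := Finset.image_congr fun x hx => h x hx
  _ = s := Finset.image_id

end Tau

/-- The involution on `KV` induced by the swap of `a` and `b`. -/
def tauV (a b : Fin n) (v : KV n k) : KV n k := pV (Equiv.swap a b) v

lemma tauV_tauV (a b : Fin n) (v : KV n k) : tauV a b (tauV a b v) = v := by
  unfold tauV
  rw [pV_pV, Equiv.swap_mul_self]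
  apply Subtype.ext
  show v.1.image _ = v.1
  rw [show ⇑(1 : Equiv.Perm (Fin n)) = id from rfl, Finset.image_id]

lemma tauV_coe (a b : Fin n) (v : KV n k) : (tauV a b v).1 = v.1.image (Equiv.swap a b) := rfl

/-- `tauV` as an equivalence. -/
def tEquiv (a b : Fin n) : KV n k ≃ KV n k where
  toFun := tauV a b
  invFun := tauV a b
  left_inv := tauV_tauV a b
  right_inv := tauV_tauV a b

lemma dW_succ_tau (L : ℕ) (v w : KV n k) (a b : Fin n) :
    dW n k (L+1) v (tauV a b w) =
      ∑ y : KV n k, dW n k L v (tauV a b y) * (if Disjoint y.1 w.1 then 1 else 0) := by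
  rw [dW_succ, ← Equiv.sum_comp (tEquiv a b)
    (fun x => dW n k L v x * (if Disjoint x.1 (tauV a b w).1 then 1 else 0))]
  refine Finset.sum_congr rfl fun y _ => ?_
  have hiff : Disjoint ((tEquiv a b) y).1 (tauV a b w).1 ↔ Disjoint y.1 w.1 := by
    show Disjoint (y.1.image _) (w.1.image _) ↔ _
    exact Finset.disjoint_image (Equiv.swap a b).injective
  rw [if_congr hiff rfl rfl]
  rfl

lemma mem_tauV_of (a b : Fin n) {y : KV n k} (hay : a ∈ y.1) (hby : b ∉ y.1) :
    (tauV a b y).1 = insert b (y.1.erase a) := by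
  rw [tauV_coe, Equiv.swap_comm, image_swap_of_mem hby hay]

/-- The key monotonicity lemma: moving `w` "closer to" `v` (replacing `b ∈ w \ v` by
`a ∈ v \ w`) increases even-length walk counts and decreases odd-length walk counts. -/
lemma dW_mono (L : ℕ) : ∀ (v w : KV n k) (a b : Fin n), a ∈ v.1 → a ∉ w.1 → b ∉ v.1 → b ∈ w.1 →
    (Even L → dW n k L v w ≤ dW n k L v (tauV a b w)) ∧
    (Odd L → dW n k L v (tauV a b w) ≤ dW n k L v w) := by
  induction L with
  | zero =>
    intro v w a b hav haw hbv hbw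
    refine ⟨fun _ => ?_, fun h => absurd h (by simp [Nat.odd_iff])⟩
    have hne : v ≠ w := fun h => haw (h ▸ hav)
    show (if v = w then 1 else 0) ≤ _
    rw [if_neg hne]
    exact Nat.zero_le _
  | succ L ih =>
    intro v w a b hav haw hbv hbw
    have hab : a ≠ b := fun h => hbv (h ▸ hav)
    have key : ∀ y : KV n k, Disjoint y.1 w.1 →
        (Odd L → dW n k L v y ≤ dW n k L v (tauV a b y)) ∧
        (Even L → dW n k L v (tauV a b y) ≤ dW n k L v y) := by
      intro y hd
      have hby : b ∉ y.1 := Finset.disjoint_left.mp hd.symm hbw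
      by_cases hay : a ∈ y.1
      · have hcoe := mem_tauV_of a b hay hby
        have h1 : a ∉ (tauV a b y).1 := by
          rw [hcoe]
          simp only [Finset.mem_insert, Finset.mem_erase]
          push_neg
          exact ⟨hab, fun h => absurd rfl h⟩
        have h2 : b ∈ (tauV a b y).1 := by rw [hcoe]; exact Finset.mem_insert_self _ _
        have h3 := ih v (tauV a b y) a b hav h1 hbv h2
        rw [tauV_tauV] at h3
        exact ⟨fun hL => h3.2 hL, fun hL => h3.1 hL⟩
      · have hyy : tauV a b y = y := by
          apply Subtype.ext
          rw [tauV_coe]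
          exact image_swap_of_not_mem hay hby
        rw [hyy]
        exact ⟨fun _ => le_refl _, fun _ => le_refl _⟩
    constructor
    · intro hE
      have hL : Odd L := by
        rcases Nat.even_or_odd L with h | h
        · exact absurd hE (by simp [Nat.even_add_one, h])
        · exact h
      rw [dW_succ, dW_succ_tau]
      refine Finset.sum_le_sum fun y _ => ?_
      by_cases hd : Disjoint y.1 w.1
      · rw [if_pos hd, mul_one, mul_one]
        exact (key y hd).1 hL
      · rw [if_neg hd, mul_zero, mul_zero]
    · intro hO
      have hL : Even L := by
        rcases Nat.even_or_odd L with h | h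
        · exact h
        · exact absurd hO (by simp [Nat.odd_add_one, Nat.not_even_iff_odd.mpr h])
      rw [dW_succ_tau, dW_succ]
      refine Finset.sum_le_sum fun y _ => ?_
      by_cases hd : Disjoint y.1 w.1
      · rw [if_pos hd, mul_one, mul_one]
        exact (key y hd).2 hL
      · rw [if_neg hd, mul_zero, mul_zero]

lemma dW_one (v w : KV n k) : dW n k 1 v w = if Disjoint v.1 w.1 then 1 else 0 := by
  rw [dW_succ]
  rw [Finset.sum_eq_single v]
  · show (if v = v then 1 else 0) * _ = _
    rw [if_pos rfl, one_mul]
  · intro x _ hxv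
    show (if v = x then 1 else 0) * _ = 0
    rw [if_neg fun h => hxv h.symm, zero_mul]
  · intro h; exact absurd (Finset.mem_univ v) h

/-- Construction of an auxiliary vertex `y` disjoint from `w`, containing `a`, with
prescribed intersection size `c` with `v`. -/
lemma exists_witness (hn : 2*k < n) (v w : KV n k) {a : Fin n} (hav : a ∈ v.1) (haw : a ∉ w.1)
    (c : ℕ) (hc1 : 1 ≤ c) (hc2 : c + (v.1 ∩ w.1).card ≤ k)
    (hc3 : 3*k ≤ c + n + (v.1 ∩ w.1).card) :
    ∃ y : KV n k, Disjoint y.1 w.1 ∧ a ∈ y.1 ∧ (v.1 ∩ y.1).card = c := by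
  have htv : (v.1 ∩ w.1).card + (v.1 \ w.1).card = k := by
    rw [Finset.card_inter_add_card_sdiff]; exact v.2
  have hamem : a ∈ v.1 \ w.1 := Finset.mem_sdiff.mpr ⟨hav, haw⟩
  have hcard_erase : ((v.1 \ w.1).erase a).card = (v.1 \ w.1).card - 1 :=
    Finset.card_erase_of_mem hamem
  obtain ⟨s₁, hs₁sub, hs₁card⟩ := Finset.exists_subset_card_eq (s := (v.1 \ w.1).erase a) (n := c-1)
    (by omega)
  have has₁ : a ∉ s₁ := fun h => (Finset.mem_erase.mp (hs₁sub h)).1 rfl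
  set Y₁ : Finset (Fin n) := insert a s₁ with hY₁
  have hY₁sub : Y₁ ⊆ v.1 \ w.1 := by
    rw [hY₁, Finset.insert_subset_iff]
    exact ⟨hamem, hs₁sub.trans (Finset.erase_subset _ _)⟩
  have hY₁card : Y₁.card = c := by
    rw [hY₁, Finset.card_insert_of_notMem has₁, hs₁card]; omega
  have hcardvw : (v.1 ∪ w.1).card + (v.1 ∩ w.1).card = k + k := by
    rw [Finset.card_union_add_card_inter, v.2, w.2]
  have hRcard : (Finset.univ \ (v.1 ∪ w.1) : Finset (Fin n)).card = n - (v.1 ∪ w.1).card := by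
    rw [Finset.card_sdiff_of_subset (Finset.subset_univ _), Finset.card_univ, Fintype.card_fin]
  obtain ⟨Y₂, hY₂sub, hY₂card⟩ := Finset.exists_subset_card_eq (s := Finset.univ \ (v.1 ∪ w.1)) (n := k-c)
    (by omega)
  have hdisjY : Disjoint Y₁ Y₂ := by
    rw [Finset.disjoint_left]
    intro x hx1 hx2
    have h1 : x ∈ v.1 := (Finset.mem_sdiff.mp (hY₁sub hx1)).1
    have h2 := Finset.mem_sdiff.mp (hY₂sub hx2)
    exact h2.2 (Finset.mem_union_left _ h1)
  have hYcard : (Y₁ ∪ Y₂).card = k := by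
    rw [Finset.card_union_of_disjoint hdisjY, hY₁card, hY₂card]; omega
  refine ⟨⟨Y₁ ∪ Y₂, hYcard⟩, ?_, ?_, ?_⟩
  · rw [Finset.disjoint_union_left]
    constructor
    · exact Finset.disjoint_left.mpr fun x hx hxw => (Finset.mem_sdiff.mp (hY₁sub hx)).2 hxw
    · exact Finset.disjoint_left.mpr fun x hx hxw =>
        (Finset.mem_sdiff.mp (hY₂sub hx)).2 (Finset.mem_union_right _ hxw)
  · exact Finset.mem_union_left _ (Finset.mem_insert_self a s₁)
  · show (v.1 ∩ (Y₁ ∪ Y₂)).card = c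
    have : v.1 ∩ (Y₁ ∪ Y₂) = Y₁ := by
      rw [Finset.inter_union_distrib_left]
      have h1 : v.1 ∩ Y₁ = Y₁ :=
        Finset.inter_eq_right.mpr fun x hx => (Finset.mem_sdiff.mp (hY₁sub hx)).1
      have h2 : v.1 ∩ Y₂ = ∅ := by
        rw [← Finset.disjoint_iff_inter_eq_empty, Finset.disjoint_left]
        intro x hxv hx2
        exact (Finset.mem_sdiff.mp (hY₂sub hx2)).2 (Finset.mem_union_left _ hxv)
      rw [h1, h2, Finset.union_empty]
    rw [this, hY₁card]

lemma card_inter_tauV_left {v y : KV n k} {a b : Fin n} (hav : a ∈ v.1) (hay : a ∈ y.1)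
    (hbv : b ∉ v.1) (hby : b ∉ y.1) :
    (v.1 ∩ (tauV a b y).1).card = (v.1 ∩ y.1).card - 1 := by
  rw [mem_tauV_of a b hay hby]
  have : v.1 ∩ insert b (y.1.erase a) = (v.1 ∩ y.1).erase a := by
    ext x
    simp only [Finset.mem_inter, Finset.mem_insert, Finset.mem_erase]
    constructor
    · rintro ⟨hxv, (rfl | ⟨hxa, hxy⟩)⟩
      · exact absurd hxv hbv
      · exact ⟨hxa, hxv, hxy⟩
    · rintro ⟨hxa, hxv, hxy⟩
      exact ⟨hxv, Or.inr ⟨hxa, hxy⟩⟩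
  rw [this, Finset.card_erase_of_mem (Finset.mem_inter.mpr ⟨hav, hay⟩)]

lemma card_inter_tauV_up {v w : KV n k} {a b : Fin n} (hav : a ∈ v.1) (haw : a ∉ w.1)
    (hbv : b ∉ v.1) (hbw : b ∈ w.1) :
    (v.1 ∩ (tauV a b w).1).card = (v.1 ∩ w.1).card + 1 := by
  rw [tauV_coe, image_swap_of_mem haw hbw]
  have : v.1 ∩ insert a (w.1.erase b) = insert a (v.1 ∩ w.1) := by
    ext x
    simp only [Finset.mem_inter, Finset.mem_insert, Finset.mem_erase]
    constructor
    · rintro ⟨hxv, (rfl | ⟨hxb, hxw⟩)⟩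
      · exact Or.inl rfl
      · exact Or.inr ⟨hxv, hxw⟩
    · rintro (rfl | ⟨hxv, hxw⟩)
      · exact ⟨hav, Or.inl rfl⟩
      · exact ⟨hxv, Or.inr ⟨fun h => hbv (h ▸ hxv), hxw⟩⟩
  rw [this, Finset.card_insert_of_notMem fun h => haw (Finset.mem_inter.mp h).2]

lemma term_le_odd (L : ℕ) (hL : Odd L) (v w : KV n k) (a b : Fin n)
    (hav : a ∈ v.1) (hbv : b ∉ v.1) (hbw : b ∈ w.1) :
    ∀ y : KV n k, Disjoint y.1 w.1 → dW n k L v y ≤ dW n k L v (tauV a b y) := by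
  intro y hd
  have hab : a ≠ b := fun h => hbv (h ▸ hav)
  have hby : b ∉ y.1 := Finset.disjoint_left.mp hd.symm hbw
  by_cases hay : a ∈ y.1
  · have hcoe := mem_tauV_of a b hay hby
    have h1 : a ∉ (tauV a b y).1 := by
      rw [hcoe]; simp only [Finset.mem_insert, Finset.mem_erase]; push_neg
      exact ⟨hab, fun h => absurd rfl h⟩
    have h2 : b ∈ (tauV a b y).1 := by rw [hcoe]; exact Finset.mem_insert_self _ _
    have h3 := (dW_mono L v (tauV a b y) a b hav h1 hbv h2).2 hL
    rwa [tauV_tauV] at h3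
  · have hyy : tauV a b y = y := by
      apply Subtype.ext; rw [tauV_coe]; exact image_swap_of_not_mem hay hby
    rw [hyy]

lemma term_le_even (L : ℕ) (hL : Even L) (v w : KV n k) (a b : Fin n)
    (hav : a ∈ v.1) (hbv : b ∉ v.1) (hbw : b ∈ w.1) :
    ∀ y : KV n k, Disjoint y.1 w.1 → dW n k L v (tauV a b y) ≤ dW n k L v y := by
  intro y hd
  have hab : a ≠ b := fun h => hbv (h ▸ hav)
  have hby : b ∉ y.1 := Finset.disjoint_left.mp hd.symm hbw
  by_cases hay : a ∈ y.1
  · have hcoe := mem_tauV_of a b hay hby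
    have h1 : a ∉ (tauV a b y).1 := by
      rw [hcoe]; simp only [Finset.mem_insert, Finset.mem_erase]; push_neg
      exact ⟨hab, fun h => absurd rfl h⟩
    have h2 : b ∈ (tauV a b y).1 := by rw [hcoe]; exact Finset.mem_insert_self _ _
    have h3 := (dW_mono L v (tauV a b y) a b hav h1 hbv h2).1 hL
    rwa [tauV_tauV] at h3
  · have hyy : tauV a b y = y := by
      apply Subtype.ext; rw [tauV_coe]; exact image_swap_of_not_mem hay hby
    rw [hyy]

/-- Strict monotonicity of walk counts, with quantitative region bookkeeping. -/
lemma dW_strict (hn : 2*k < n) :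
    ∀ m : ℕ,
    (∀ (v w : KV n k) (a b : Fin n), a ∈ v.1 → a ∉ w.1 → b ∉ v.1 → b ∈ w.1 →
      k ≤ m*(n-2*k) + (v.1 ∩ w.1).card + 1 →
      dW n k (2*m) v w < dW n k (2*m) v (tauV a b w)) ∧
    (∀ (v w : KV n k) (a b : Fin n), a ∈ v.1 → a ∉ w.1 → b ∉ v.1 → b ∈ w.1 →
      (v.1 ∩ w.1).card ≤ m*(n-2*k) →
      dW n k (2*m+1) v (tauV a b w) < dW n k (2*m+1) v w) := by
  have hkub : ∀ (v w : KV n k) (a : Fin n), a ∈ v.1 → a ∉ w.1 → (v.1 ∩ w.1).card < k := by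
    intro v w a hav haw
    have : v.1 ∩ w.1 ⊂ v.1 :=
      Finset.ssubset_iff_of_subset Finset.inter_subset_left |>.mpr
        ⟨a, hav, fun h => haw (Finset.mem_inter.mp h).2⟩
    have h2 := Finset.card_lt_card this
    rwa [v.2] at h2
  intro m
  induction m with
  | zero =>
    constructor
    · intro v w a b hav haw hbv hbw hyp
      have htk : (v.1 ∩ w.1).card < k := by
        have := hkub v w a hav haw; omega
      simp only [Nat.zero_mul, Nat.zero_add] at hyp
      -- here t = k - 1, so v = tauV a b w
      have htk1 : (v.1 ∩ w.1).card = k - 1 := by omega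
      have hwv1 : (w.1 \ v.1).card = 1 := by
        have h1 : (w.1 ∩ v.1).card + (w.1 \ v.1).card = k := by
          rw [Finset.card_inter_add_card_sdiff]; exact w.2
        rw [Finset.inter_comm] at h1
        omega
      have hwv : w.1 \ v.1 = {b} := by
        rw [Finset.card_eq_one] at hwv1
        obtain ⟨x, hx⟩ := hwv1
        have hbmem : b ∈ w.1 \ v.1 := Finset.mem_sdiff.mpr ⟨hbw, hbv⟩
        rw [hx] at hbmem ⊢
        rw [Finset.mem_singleton] at hbmem
        rw [hbmem]
      have herase : w.1.erase b ⊆ v.1 := by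
        intro x hx
        rw [Finset.mem_erase] at hx
        by_contra hxv
        have : x ∈ w.1 \ v.1 := Finset.mem_sdiff.mpr ⟨hx.2, hxv⟩
        rw [hwv, Finset.mem_singleton] at this
        exact hx.1 this
      have hveq : v = tauV a b w := by
        apply Subtype.ext
        rw [tauV_coe, image_swap_of_mem haw hbw]
        have hsub : insert a (w.1.erase b) ⊆ v.1 :=
          Finset.insert_subset hav herase
        have hcard : v.1.card ≤ (insert a (w.1.erase b)).card := by
          rw [Finset.card_insert_of_notMem fun h => haw (Finset.mem_erase.mp h).2,
            Finset.card_erase_of_mem hbw, v.2, w.2]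
          omega
        exact (Finset.eq_of_subset_of_card_le hsub hcard).symm
      have hne : v ≠ w := fun h => haw (h ▸ hav)
      show (if v = w then 1 else 0) < (if v = tauV a b w then 1 else 0)
      rw [if_neg hne, if_pos hveq]
      omega
    · intro v w a b hav haw hbv hbw hyp
      simp only [Nat.zero_mul, Nat.le_zero] at hyp
      have hdvw : Disjoint v.1 w.1 := by
        rw [Finset.disjoint_iff_inter_eq_empty, ← Finset.card_eq_zero]; exact hyp
      have hndvt : ¬ Disjoint v.1 (tauV a b w).1 := by
        rw [Finset.not_disjoint_iff]
        refine ⟨a, hav, ?_⟩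
        rw [tauV_coe, image_swap_of_mem haw hbw]
        exact Finset.mem_insert_self _ _
      have h01 : 2*0+1 = 1 := rfl
      rw [h01, dW_one, dW_one, if_pos hdvw, if_neg hndvt]
      omega
  | succ m ih =>
    have hSE : ∀ (v w : KV n k) (a b : Fin n), a ∈ v.1 → a ∉ w.1 → b ∉ v.1 → b ∈ w.1 →
        k ≤ (m+1)*(n-2*k) + (v.1 ∩ w.1).card + 1 →
        dW n k (2*(m+1)) v w < dW n k (2*(m+1)) v (tauV a b w) := by
      intro v w a b hav haw hbv hbw hyp
      have htk : (v.1 ∩ w.1).card < k := hkub v w a hav haw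
      have hmul : (m+1)*(n-2*k) = m*(n-2*k) + (n-2*k) := by ring
      rw [hmul] at hyp
      set t := (v.1 ∩ w.1).card with ht
      set M := m*(n-2*k) with hM
      -- choose c
      set c := max 1 (k - (n-2*k) - t) with hc
      have hc1 : 1 ≤ c := le_max_left _ _
      have hcge : k - (n-2*k) - t ≤ c := le_max_right _ _
      have hcle : c ≤ k - t := by
        rw [hc]; apply max_le <;> omega
      obtain ⟨y, hdy, hay, hcy⟩ := exists_witness hn v w hav haw c hc1 (by omega) (by omega)
      have hby : b ∉ y.1 := Finset.disjoint_left.mp hdy.symm hbw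
      have hab : a ≠ b := fun h => hbv (h ▸ hav)
      have h2eq : 2*(m+1) = (2*m+1)+1 := by ring
      rw [h2eq, dW_succ, dW_succ_tau]
      apply Finset.sum_lt_sum
      · intro z _
        by_cases hd : Disjoint z.1 w.1
        · rw [if_pos hd, mul_one, mul_one]
          exact term_le_odd (2*m+1) (odd_two_mul_add_one m) v w a b hav hbv hbw z hd
        · rw [if_neg hd, mul_zero, mul_zero]
      · refine ⟨y, Finset.mem_univ y, ?_⟩
        rw [if_pos hdy, mul_one, mul_one]
        -- strict at y via ih.2 at (v, tauV a b y)
        have hcoe := mem_tauV_of a b hay hby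
        have h1 : a ∉ (tauV a b y).1 := by
          rw [hcoe]; simp only [Finset.mem_insert, Finset.mem_erase]; push_neg
          exact ⟨hab, fun h => absurd rfl h⟩
        have h2 : b ∈ (tauV a b y).1 := by rw [hcoe]; exact Finset.mem_insert_self _ _
        have hcard : (v.1 ∩ (tauV a b y).1).card = c - 1 := by
          rw [card_inter_tauV_left hav hay hbv hby, hcy]
        have hle : (v.1 ∩ (tauV a b y).1).card ≤ m*(n-2*k) := by
          rw [hcard, hc, ← hM]; omega
        have := ih.2 v (tauV a b y) a b hav h1 hbv h2 hle
        rwa [tauV_tauV] at this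
    refine ⟨hSE, ?_⟩
    intro v w a b hav haw hbv hbw hyp
    have htk : (v.1 ∩ w.1).card < k := hkub v w a hav haw
    set t := (v.1 ∩ w.1).card with ht
    set c := k - t with hc
    obtain ⟨y, hdy, hay, hcy⟩ := exists_witness hn v w hav haw c (by omega) (by omega) (by omega)
    have hby : b ∉ y.1 := Finset.disjoint_left.mp hdy.symm hbw
    have hab : a ≠ b := fun h => hbv (h ▸ hav)
    rw [dW_succ_tau, dW_succ]
    apply Finset.sum_lt_sum
    · intro z _
      by_cases hd : Disjoint z.1 w.1
      · rw [if_pos hd, mul_one, mul_one]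
        exact term_le_even (2*(m+1)) (even_two_mul (m+1)) v w a b hav hbv hbw z hd
      · rw [if_neg hd, mul_zero, mul_zero]
    · refine ⟨y, Finset.mem_univ y, ?_⟩
      rw [if_pos hdy, mul_one, mul_one]
      have hcoe := mem_tauV_of a b hay hby
      have h1 : a ∉ (tauV a b y).1 := by
        rw [hcoe]; simp only [Finset.mem_insert, Finset.mem_erase]; push_neg
        exact ⟨hab, fun h => absurd rfl h⟩
      have h2 : b ∈ (tauV a b y).1 := by rw [hcoe]; exact Finset.mem_insert_self _ _
      have hcard : (v.1 ∩ (tauV a b y).1).card = c - 1 := by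
        rw [card_inter_tauV_left hav hay hbv hby, hcy]
      have hmul : (m+1)*(n-2*k) = m*(n-2*k) + (n-2*k) := by ring
      rw [hmul] at hyp
      have hkk : k ≤ (m+1)*(n-2*k) + (v.1 ∩ (tauV a b y).1).card + 1 := by
        rw [hcard, hmul, hc]
        have hMge : 0 ≤ m*(n-2*k) := Nat.zero_le _
        omega
      have := hSE v (tauV a b y) a b hav h1 hbv h2 hkk
      rwa [tauV_tauV] at this

section PermExist

variable {α : Type*} [Fintype α] [DecidableEq α]

lemma exists_perm_image (s t : Finset α) (h : s.card = t.card) :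
    ∃ π : Equiv.Perm α, s.image π = t := by
  have hcompl : sᶜ.card = tᶜ.card := by
    rw [Finset.card_compl, Finset.card_compl, h]
  classical
  let e₁ : ↥s ≃ ↥t := Finset.equivOfCardEq h
  let e₂ : ↥(sᶜ) ≃ ↥(tᶜ) := Finset.equivOfCardEq hcompl
  let es : {x // ¬ x ∈ s} ≃ ↥(sᶜ) := Equiv.subtypeEquivRight (fun x => (Finset.mem_compl).symm)
  let et : {x // ¬ x ∈ t} ≃ ↥(tᶜ) := Equiv.subtypeEquivRight (fun x => (Finset.mem_compl).symm)
  let π : Equiv.Perm α :=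
    ((Equiv.sumCompl (· ∈ s)).symm.trans
      (Equiv.sumCongr e₁ (es.trans (e₂.trans et.symm)))).trans (Equiv.sumCompl (· ∈ t))
  refine ⟨π, ?_⟩
  have hsub : s.image π ⊆ t := by
    intro x hx
    rw [Finset.mem_image] at hx
    obtain ⟨y, hy, rfl⟩ := hx
    show ((Equiv.sumCompl (· ∈ t)) (Equiv.sumCongr e₁ (es.trans (e₂.trans et.symm))
      ((Equiv.sumCompl (· ∈ s)).symm y))) ∈ t
    rw [Equiv.sumCompl_symm_apply_of_pos hy]
    show ((Equiv.sumCompl (· ∈ t)) (Sum.inl (e₁ ⟨y, hy⟩))) ∈ t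
    rw [Equiv.sumCompl_apply_inl]
    exact (e₁ ⟨y, hy⟩).2
  apply Finset.eq_of_subset_of_card_le hsub
  rw [Finset.card_image_of_injective _ π.injective, h]

/-- A permutation moving a finset to another of equal cardinality, pointwise fixing a
given finset disjoint from both. -/
lemma exists_perm_image_fixing (S C C' : Finset α) (hC : Disjoint C S) (hC' : Disjoint C' S)
    (h : C.card = C'.card) :
    ∃ π : Equiv.Perm α, (∀ x ∈ S, π x = x) ∧ C.image π = C' := by
  classical
  -- work in the subtype of elements not in S
  let β := {x // ¬ x ∈ S}
  let Cs : Finset β := C.subtype _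
  let Cs' : Finset β := C'.subtype _
  have hCs : Cs.card = C.card := by
    rw [Finset.card_subtype, Finset.filter_true_of_mem fun x hx =>
      Finset.disjoint_left.mp hC hx]
  have hCs' : Cs'.card = C'.card := by
    rw [Finset.card_subtype, Finset.filter_true_of_mem fun x hx =>
      Finset.disjoint_left.mp hC' hx]
  obtain ⟨ρ, hρ⟩ := exists_perm_image Cs Cs' (by rw [hCs, hCs', h])
  let π : Equiv.Perm α := Equiv.Perm.subtypeCongr (Equiv.refl {x // x ∈ S}) ρ
  have hfix : ∀ x ∈ S, π x = x := by
    intro x hx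
    show Equiv.Perm.subtypeCongr _ _ x = x
    rw [Equiv.Perm.subtypeCongr.left_apply _ _ hx]
    rfl
  refine ⟨π, hfix, ?_⟩
  have hsub : C.image π ⊆ C' := by
    intro x hx
    rw [Finset.mem_image] at hx
    obtain ⟨y, hy, rfl⟩ := hx
    have hyS : ¬ y ∈ S := Finset.disjoint_left.mp hC hy
    have : π y = (ρ ⟨y, hyS⟩ : β).1 := Equiv.Perm.subtypeCongr.right_apply _ _ hyS
    rw [this]
    have hmem : ρ ⟨y, hyS⟩ ∈ Cs' := by
      rw [← hρ, Finset.mem_image]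
      exact ⟨⟨y, hyS⟩, Finset.mem_subtype.mpr hy, rfl⟩
    exact (Finset.mem_subtype.mp hmem)
  apply Finset.eq_of_subset_of_card_le hsub
  rw [Finset.card_image_of_injective _ π.injective, h]

lemma image_fix {π : Equiv.Perm α} {S T : Finset α} (hfix : ∀ x ∈ S, π x = x) (hT : T ⊆ S) :
    T.image π = T :=
  (Finset.image_congr fun x hx => hfix x (hT hx)).trans Finset.image_id

/-- A permutation simultaneously carrying three pairwise disjoint finsets to three other
pairwise disjoint finsets of matching cardinalities. -/
lemma exists_perm_three (A B C A' B' C' : Finset α)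
    (hAB : Disjoint A B) (hAC : Disjoint A C) (hBC : Disjoint B C)
    (hAB' : Disjoint A' B') (hAC' : Disjoint A' C') (hBC' : Disjoint B' C')
    (hA : A.card = A'.card) (hB : B.card = B'.card) (hC : C.card = C'.card) :
    ∃ π : Equiv.Perm α, A.image π = A' ∧ B.image π = B' ∧ C.image π = C' := by
  obtain ⟨π₁, hπ₁⟩ := exists_perm_image A A' hA
  have hB₁ : Disjoint (B.image π₁) A' := by
    rw [← hπ₁]
    exact (Finset.disjoint_image π₁.injective).mpr hAB.symm
  obtain ⟨π₂, hπ₂fix, hπ₂⟩ := exists_perm_image_fixing A' (B.image π₁) B' hB₁ hAB'.symm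
    (by rw [Finset.card_image_of_injective _ π₁.injective, hB])
  have hA'fix₂ : A'.image π₂ = A' := image_fix hπ₂fix (le_refl _)
  have hC₂ : Disjoint (((C.image π₁).image π₂)) (A' ∪ B') := by
    rw [Finset.disjoint_union_right]
    constructor
    · have h1 : Disjoint (C.image π₁) A' := by
        rw [← hπ₁]; exact (Finset.disjoint_image π₁.injective).mpr hAC.symm
      have := (Finset.disjoint_image π₂.injective).mpr h1
      rwa [hA'fix₂] at this
    · rw [← hπ₂]
      exact (Finset.disjoint_image π₂.injective).mpr
        ((Finset.disjoint_image π₁.injective).mpr hBC.symm)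
  obtain ⟨π₃, hπ₃fix, hπ₃⟩ := exists_perm_image_fixing (A' ∪ B') ((C.image π₁).image π₂) C'
    hC₂ (by rw [Finset.disjoint_union_right]; exact ⟨hAC'.symm, hBC'.symm⟩)
    (by rw [Finset.card_image_of_injective _ π₂.injective,
            Finset.card_image_of_injective _ π₁.injective, hC])
  refine ⟨(π₁.trans π₂).trans π₃, ?_, ?_, ?_⟩
  all_goals
    rw [show ⇑((π₁.trans π₂).trans π₃) = ⇑π₃ ∘ (⇑π₂ ∘ ⇑π₁) by
          rw [Equiv.coe_trans, Equiv.coe_trans],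
        ← Finset.image_image (g := ⇑π₃), ← Finset.image_image (g := ⇑π₂)]
  · rw [hπ₁, hA'fix₂]
    exact image_fix hπ₃fix Finset.subset_union_left
  · rw [hπ₂]
    exact image_fix hπ₃fix Finset.subset_union_right
  · exact hπ₃

end PermExist

/-- Walk counts only depend on the size of the intersection. -/
lemma dW_inter_card (L : ℕ) (v₁ w₁ v₂ w₂ : KV n k)
    (h : (v₁.1 ∩ w₁.1).card = (v₂.1 ∩ w₂.1).card) :
    dW n k L v₁ w₁ = dW n k L v₂ w₂ := by
  have hiv : ∀ v w : KV n k, (v.1 ∩ w.1).card + (v.1 \ w.1).card = k := by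
    intro v w; rw [Finset.card_inter_add_card_sdiff]; exact v.2
  have hiw : ∀ v w : KV n k, (v.1 ∩ w.1).card + (w.1 \ v.1).card = k := by
    intro v w; rw [Finset.inter_comm, Finset.card_inter_add_card_sdiff]; exact w.2
  have d1 : ∀ v w : KV n k, Disjoint (v.1 ∩ w.1) (v.1 \ w.1) := fun v w =>
    Finset.disjoint_left.mpr fun x hx hx' =>
      (Finset.mem_sdiff.mp hx').2 (Finset.mem_inter.mp hx).2
  have d2 : ∀ v w : KV n k, Disjoint (v.1 ∩ w.1) (w.1 \ v.1) := fun v w =>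
    Finset.disjoint_left.mpr fun x hx hx' =>
      (Finset.mem_sdiff.mp hx').2 (Finset.mem_inter.mp hx).1
  have d3 : ∀ v w : KV n k, Disjoint (v.1 \ w.1) (w.1 \ v.1) := fun v w =>
    Finset.disjoint_left.mpr fun x hx hx' =>
      (Finset.mem_sdiff.mp hx).2 (Finset.mem_sdiff.mp hx').1
  obtain ⟨π, hA, hB, hC⟩ := exists_perm_three (v₁.1 ∩ w₁.1) (v₁.1 \ w₁.1) (w₁.1 \ v₁.1)
    (v₂.1 ∩ w₂.1) (v₂.1 \ w₂.1) (w₂.1 \ v₂.1)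
    (d1 v₁ w₁) (d2 v₁ w₁) (d3 v₁ w₁) (d1 v₂ w₂) (d2 v₂ w₂) (d3 v₂ w₂)
    h (by have := hiv v₁ w₁; have := hiv v₂ w₂; omega)
    (by have := hiw v₁ w₁; have := hiw v₂ w₂; omega)
  have hv : pV π v₁ = v₂ := by
    apply Subtype.ext
    show v₁.1.image π = v₂.1
    rw [← Finset.sdiff_union_inter v₁.1 w₁.1, Finset.image_union, hA, hB,
      Finset.sdiff_union_inter]
  have hw : pV π w₁ = w₂ := by
    apply Subtype.ext
    show w₁.1.image π = w₂.1
    rw [← Finset.sdiff_union_inter w₁.1 v₁.1, Finset.image_union, hC,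
      show w₁.1 ∩ v₁.1 = v₁.1 ∩ w₁.1 from Finset.inter_comm _ _, hA,
      show v₂.1 ∩ w₂.1 = w₂.1 ∩ v₂.1 from Finset.inter_comm _ _,
      Finset.sdiff_union_inter]
  calc dW n k L v₁ w₁ = dW n k L (pV π v₁) (pV π w₁) := (dW_perm π L v₁ w₁).symm
  _ = dW n k L v₂ w₂ := by rw [hv, hw]

/-- One strict climbing step. -/
lemma dW_climb_step (hn : 2*k < n) (v w : KV n k) (ht : (v.1 ∩ w.1).card < k) :
    ∃ w' : KV n k, (v.1 ∩ w'.1).card = (v.1 ∩ w.1).card + 1 ∧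
      dW n k (2*k) v w < dW n k (2*k) v w' := by
  have hvw : (v.1 \ w.1).Nonempty := by
    rw [← Finset.card_pos]
    have := Finset.card_inter_add_card_sdiff v.1 w.1
    rw [v.2] at this
    omega
  have hwv : (w.1 \ v.1).Nonempty := by
    rw [← Finset.card_pos]
    have := Finset.card_inter_add_card_sdiff w.1 v.1
    rw [w.2, Finset.inter_comm] at this
    omega
  obtain ⟨a, ha⟩ := hvw
  obtain ⟨b, hb⟩ := hwv
  rw [Finset.mem_sdiff] at ha hb
  refine ⟨tauV a b w, card_inter_tauV_up ha.1 ha.2 hb.2 hb.1, ?_⟩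
  apply (dW_strict hn k).1 v w a b ha.1 ha.2 hb.2 hb.1
  have hd : 1 ≤ n - 2*k := by omega
  have : k ≤ k*(n-2*k) := Nat.le_mul_of_pos_right k (by omega)
  omega

/-- Climbing from intersection size `< j` up to exactly `j`, strictly increasing the count. -/
lemma dW_climb (hn : 2*k < n) (j : ℕ) (hj : j < k) :
    ∀ (g : ℕ) (v w : KV n k), (v.1 ∩ w.1).card + g + 1 = j →
      ∃ w' : KV n k, (v.1 ∩ w'.1).card = j ∧ dW n k (2*k) v w < dW n k (2*k) v w' := by
  intro g
  induction g with
  | zero =>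
    intro v w hg
    obtain ⟨w', hw'c, hw'lt⟩ := dW_climb_step hn v w (by omega)
    exact ⟨w', by omega, hw'lt⟩
  | succ g ih =>
    intro v w hg
    obtain ⟨w₁, hw₁c, hw₁lt⟩ := dW_climb_step hn v w (by omega)
    obtain ⟨w', hw'c, hw'lt⟩ := ih v w₁ (by omega)
    exact ⟨w', hw'c, lt_trans hw₁lt hw'lt⟩

/-! ### Walk counts in graphs -/

open scoped Classical in
noncomputable def wcount {α : Type*} [Fintype α] (G : SimpleGraph α) : ℕ → α → α → ℕ
  | 0, v, w => if v = w then 1 else 0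
  | (L+1), v, w => ∑ x, wcount G L v x * (if G.Adj x w then 1 else 0)

open scoped Classical in
lemma wcount_succ {α : Type*} [Fintype α] (G : SimpleGraph α) (L : ℕ) (v w : α) :
    wcount G (L+1) v w = ∑ x, wcount G L v x * (if G.Adj x w then 1 else 0) := rfl

open scoped Classical in
lemma wcount_iso {α β : Type*} [Fintype α] [Fintype β] {G : SimpleGraph α}
    {G' : SimpleGraph β} (e : G ≃g G') (L : ℕ) (v w : α) :
    wcount G L v w = wcount G' L (e v) (e w) := by
  induction L generalizing w with
  | zero =>
    show (if v = w then 1 else 0) = (if e v = e w then 1 else 0)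
    exact if_congr ⟨fun h => by rw [h], fun h => e.toEquiv.injective h⟩ rfl rfl
  | succ L ih =>
    rw [wcount_succ, wcount_succ]
    apply Fintype.sum_equiv e.toEquiv
    intro y
    have hiff : G'.Adj (e.toEquiv y) (e w) ↔ G.Adj y w := e.map_adj_iff
    rw [ih y, if_congr hiff rfl rfl]
    rfl

/-! ### The graphs `G_i` -/

lemma sigmaNat_lt {i : ℕ} (h2i : 2*i ≤ n) (x : Fin n) : sigmaNat i x.val < n := by
  have := x.isLt
  unfold sigmaNat
  split_ifs <;> omega

lemma sigmaPerm_val {i : ℕ} (h2i : 2*i ≤ n) (x : Fin n) :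
    ((sigmaPerm n i) x).val = sigmaNat i x.val := by
  show (sigmaFinFun n i x).val = _
  unfold sigmaFinFun
  rw [dif_pos (sigmaNat_lt h2i x)]

/-- The intersection of the two endpoints of an edge of `G_i` has size at most `i`. -/
lemma inter_card_le_of_disjoint (hn : 2*k < n) {i : ℕ} (hik : i < k) {v w : KV n k}
    (h : Disjoint v.1 (w.1.image (sigmaPerm n i))) : (v.1 ∩ w.1).card ≤ i := by
  have h2i : 2*i ≤ n := by omega
  have key : ∀ x ∈ v.1 ∩ w.1, x.val < 2*i ∧ (sigmaPerm n i x) ∉ w.1 := by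
    intro x hx
    obtain ⟨hxv, hxw⟩ := Finset.mem_inter.mp hx
    constructor
    · by_contra hge
      have hfix : sigmaPerm n i x = x := by
        apply Fin.ext
        rw [sigmaPerm_val h2i]
        unfold sigmaNat
        rw [if_neg (by omega)]
      exact (Finset.disjoint_left.mp h hxv) (Finset.mem_image.mpr ⟨x, hxw, hfix⟩)
    · intro hmem
      have : x ∈ w.1.image (sigmaPerm n i) :=
        Finset.mem_image.mpr ⟨sigmaPerm n i x, hmem, sigmaFinFun_invol n i x⟩
      exact (Finset.disjoint_left.mp h hxv) this
  have hcl : (v.1 ∩ w.1).card ≤ (Finset.range i).card := by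
    apply Finset.card_le_card_of_injOn (fun x => x.val / 2)
    · intro x hx
      rw [Finset.mem_coe, Finset.mem_range]
      show x.val / 2 < i
      have := (key x hx).1
      omega
    · intro x hx y hy hxy
      by_contra hne
      have hkx := key x hx
      have hxyne : x.val ≠ y.val := fun h' => hne (Fin.ext h')
      have hyy := (key y hy).1
      have hyv : y.val = sigmaNat i x.val := by
        unfold sigmaNat
        rw [if_pos hkx.1]
        simp only at hxy
        split_ifs <;> omega
      have hyeq : y = sigmaPerm n i x := Fin.ext (by rw [hyv, sigmaPerm_val h2i])
      exact hkx.2 (by rw [← hyeq]; exact (Finset.mem_inter.mp hy).2)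
  rwa [Finset.card_range] at hcl

lemma GGraph_adj (hn : 2*k < n) {i : ℕ} (hik : i < k) (v w : KV n k) :
    (GGraph n k i).Adj v w ↔ Disjoint v.1 (w.1.image (sigmaPerm n i)) := by
  constructor
  · exact fun h => (show v ≠ w ∧ _ from h).2
  · intro h
    show v ≠ w ∧ _
    refine ⟨?_, h⟩
    intro hvw
    rw [hvw] at h
    have := inter_card_le_of_disjoint hn hik h
    rw [Finset.inter_self, w.2] at this
    omega

/-- The vertex map induced by `σ_i`. -/
def spV (i : ℕ) (v : KV n k) : KV n k := pV (sigmaPerm n i) v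

lemma spV_spV (i : ℕ) (v : KV n k) : spV i (spV i v) = v := by
  apply Subtype.ext
  show (v.1.image _).image _ = v.1
  rw [Finset.image_image]
  have hcomp : ⇑(sigmaPerm n i) ∘ ⇑(sigmaPerm n i) = id := funext fun x => sigmaFinFun_invol n i x
  rw [hcomp, Finset.image_id]

/-- `spV` as an equivalence. -/
def spEquiv (i : ℕ) : KV n k ≃ KV n k where
  toFun := spV i
  invFun := spV i
  left_inv := spV_spV i
  right_inv := spV_spV i

open scoped Classical in
/-- Walk counts in `G_i` equal the `dW` disjointness walk counts (with a twist by `σ_i`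
at odd lengths). -/
lemma wcount_GGraph (hn : 2*k < n) {i : ℕ} (hik : i < k) (L : ℕ) (v w : KV n k) :
    (Even L → wcount (GGraph n k i) L v w = dW n k L v w) ∧
    (Odd L → wcount (GGraph n k i) L v w = dW n k L v (spV i w)) := by
  induction L generalizing w with
  | zero =>
    refine ⟨fun _ => ?_, fun h => absurd h (by simp [Nat.odd_iff])⟩
    show wcount (GGraph n k i) 0 v w = dW n k 0 v w
    unfold wcount dW
    by_cases h : v = w
    · rw [if_pos h, if_pos h]
    · rw [if_neg h, if_neg h]
  | succ L ih =>
    have hAdj : ∀ x : KV n k, (GGraph n k i).Adj x w ↔ Disjoint x.1 (spV i w).1 := by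
      intro x
      exact GGraph_adj hn hik x w
    constructor
    · intro hE
      have hL : Odd L := by
        rcases Nat.even_or_odd L with h | h
        · exact absurd hE (by simp [Nat.even_add_one, h])
        · exact h
      rw [wcount_succ]
      have step1 : ∀ x : KV n k,
          wcount (GGraph n k i) L v x * (if (GGraph n k i).Adj x w then 1 else 0) =
          dW n k L v (spV i x) * (if Disjoint x.1 (spV i w).1 then 1 else 0) := by
        intro x
        rw [(ih x).2 hL, if_congr (hAdj x) rfl rfl]
      rw [Finset.sum_congr rfl fun x _ => step1 x]
      rw [← Equiv.sum_comp (spEquiv (n := n) (k := k) i)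
        (fun x => dW n k L v (spV i x) * (if Disjoint x.1 (spV i w).1 then 1 else 0))]
      show (∑ y : KV n k, dW n k L v (spV i (spV i y)) *
        (if Disjoint (spV i y).1 (spV i w).1 then 1 else 0)) = dW n k (L+1) v w
      rw [dW_succ]
      refine Finset.sum_congr rfl fun y _ => ?_
      rw [spV_spV]
      have hiff : Disjoint (spV i y).1 (spV i w).1 ↔ Disjoint y.1 w.1 :=
        Finset.disjoint_image (sigmaPerm n i).injective
      rw [if_congr hiff rfl rfl]
    · intro hO
      have hL : Even L := by
        rcases Nat.even_or_odd L with h | h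
        · exact h
        · exact absurd hO (by simp [Nat.odd_add_one, Nat.not_even_iff_odd.mpr h])
      rw [wcount_succ, dW_succ]
      refine Finset.sum_congr rfl fun x _ => ?_
      rw [(ih x).1 hL, if_congr (hAdj x) rfl rfl]

/-- The canonical edge of `G_j` whose endpoints intersect in exactly `j` elements. -/
lemma exists_canonical_edge (hn : 2*k < n) {j : ℕ} (hj : j < k) :
    ∃ v w : KV n k, Disjoint v.1 (w.1.image (sigmaPerm n j)) ∧ (v.1 ∩ w.1).card = j := by
  have h2j : 2*j ≤ n := by omega
  set sE : Finset ℕ := (Finset.range j).image (fun m => 2*m) with hsE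
  set sv : Finset ℕ := sE ∪ Finset.Ico (2*j) (k+j) with hsv
  set sw : Finset ℕ := sE ∪ Finset.Ico (k+j) (2*k) with hsw
  have hmemE : ∀ x : ℕ, x ∈ sE ↔ ∃ m, m < j ∧ 2*m = x := by
    intro x
    rw [hsE]
    simp only [Finset.mem_image, Finset.mem_range]
  have hmemv : ∀ x : ℕ, x ∈ sv ↔ (∃ m, m < j ∧ 2*m = x) ∨ (2*j ≤ x ∧ x < k+j) := by
    intro x
    rw [hsv, Finset.mem_union, Finset.mem_Ico, hmemE]
  have hmemw : ∀ x : ℕ, x ∈ sw ↔ (∃ m, m < j ∧ 2*m = x) ∨ (k+j ≤ x ∧ x < 2*k) := by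
    intro x
    rw [hsw, Finset.mem_union, Finset.mem_Ico, hmemE]
  have hbv : ∀ m ∈ sv, m < n := by
    intro m hm
    rw [hmemv] at hm
    rcases hm with ⟨m', hm', he⟩ | h
    · omega
    · omega
  have hbw : ∀ m ∈ sw, m < n := by
    intro m hm
    rw [hmemw] at hm
    rcases hm with ⟨m', hm', he⟩ | h
    · omega
    · omega
  have hinj2 : Function.Injective (fun m : ℕ => 2*m) := by
    intro a b h
    simp only at h
    omega
  have hcardE : sE.card = j := by
    rw [hsE, Finset.card_image_of_injective _ hinj2, Finset.card_range]
  have hdisjEv : Disjoint sE (Finset.Ico (2*j) (k+j)) := by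
    rw [Finset.disjoint_left]
    intro x hx hx'
    rw [hmemE] at hx
    rw [Finset.mem_Ico] at hx'
    obtain ⟨m, hm, he⟩ := hx
    omega
  have hdisjEw : Disjoint sE (Finset.Ico (k+j) (2*k)) := by
    rw [Finset.disjoint_left]
    intro x hx hx'
    rw [hmemE] at hx
    rw [Finset.mem_Ico] at hx'
    obtain ⟨m, hm, he⟩ := hx
    omega
  have hcardv : sv.card = k := by
    rw [hsv, Finset.card_union_of_disjoint hdisjEv, hcardE, Nat.card_Ico]
    omega
  have hcardw : sw.card = k := by
    rw [hsw, Finset.card_union_of_disjoint hdisjEw, hcardE, Nat.card_Ico]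
    omega
  refine ⟨⟨sv.attachFin hbv, by rw [Finset.card_attachFin, hcardv]⟩,
          ⟨sw.attachFin hbw, by rw [Finset.card_attachFin, hcardw]⟩, ?_, ?_⟩
  · -- disjointness of v and σ_j(w)
    rw [Finset.disjoint_left]
    intro x hxv hximg
    obtain ⟨y, hyw, hyx⟩ := Finset.mem_image.mp hximg
    have hx' : x.val ∈ sv := (Finset.mem_attachFin hbv).mp hxv
    have hy' : y.val ∈ sw := (Finset.mem_attachFin hbw).mp hyw
    have hxy : x.val = sigmaNat j y.val := by
      rw [← sigmaPerm_val h2j, hyx]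
    rw [hmemv] at hx'
    rw [hmemw] at hy'
    unfold sigmaNat at hxy
    rcases hx' with ⟨m1, hm1, he1⟩ | h1 <;> rcases hy' with ⟨m2, hm2, he2⟩ | h2 <;>
      split_ifs at hxy <;> omega
  · -- intersection has size j
    have hint : (sv.attachFin hbv) ∩ (sw.attachFin hbw) = sE.attachFin
        (fun m hm => by
          apply hbv
          rw [hmemv]
          rw [hmemE] at hm
          exact Or.inl hm) := by
      ext x
      simp only [Finset.mem_inter, Finset.mem_attachFin]
      rw [hmemv, hmemw, hmemE]
      constructor
      · rintro ⟨(h1 | h1), (h2 | h2)⟩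
        · exact h1
        · exact h1
        · exact h2
        · exact absurd h2.1 (by omega)
      · intro h
        exact ⟨Or.inl h, Or.inl h⟩
    show ((sv.attachFin hbv) ∩ (sw.attachFin hbw)).card = j
    rw [hint, Finset.card_attachFin, hcardE]

/-- for `n > 2k`, `k ≥ 1` and `0 ≤ i < j < k`, the graphs `G_i(n,k)` and
`G_j(n,k)` are not isomorphic. -/
theorem GGraph_not_iso (n k i j : ℕ)
    (hn : 2 * k < n) (hk : 1 ≤ k) (hij : i < j) (hj : j < k) :
    ¬ Nonempty (GGraph n k i ≃g GGraph n k j) := by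
  rintro ⟨e⟩
  obtain ⟨v, w, hdisj, hint⟩ := exists_canonical_edge hn hj
  have hadj : (GGraph n k j).Adj v w := (GGraph_adj hn hj v w).mpr hdisj
  -- pull back along the isomorphism
  set v' := e.symm v with hv'
  set w' := e.symm w with hw'
  have hadj' : (GGraph n k i).Adj v' w' := e.symm.map_adj_iff.mpr hadj
  have hik : i < k := lt_trans hij hj
  have ht' : (v'.1 ∩ w'.1).card ≤ i :=
    inter_card_le_of_disjoint hn hik ((GGraph_adj hn hik v' w').mp hadj')
  have hEven : Even (2*k) := even_two_mul k
  -- equal walk counts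
  have h1 : wcount (GGraph n k i) (2*k) v' w' = wcount (GGraph n k j) (2*k) v w := by
    have := wcount_iso e.symm (2*k) v w
    rw [← hv', ← hw'] at this
    exact this.symm
  have h2 : dW n k (2*k) v' w' = dW n k (2*k) v w := by
    rw [← (wcount_GGraph hn hik (2*k) v' w').1 hEven,
      ← (wcount_GGraph hn hj (2*k) v w).1 hEven, h1]
  -- climb strictly from intersection ≤ i up to j
  obtain ⟨w'', hw''c, hw''lt⟩ := dW_climb hn j hj (j - (v'.1 ∩ w'.1).card - 1) v' w' (by omega)
  have h3 : dW n k (2*k) v' w'' = dW n k (2*k) v w :=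
    dW_inter_card (2*k) v' w'' v w (by rw [hw''c, hint])
  rw [h2, ← h3] at hw''lt
  exact lt_irrefl _ hw''lt
end

section
/- Let X be a bigraph and let α and β be odd involutions of X such that no vertex x of X is adjacent to α(x) and no vertex x is adjacent to β(x). Then the following are equivalent: (1) X/α and X/β are isomorphic graphs; (2) α and β are evenly conjugate, i.e. there is an even automorphism f of X with f ∘ α = β ∘ f; (3) α and β are conjugate, i.e. there is an automorphism f of X with f ∘ α = β ∘ f. -/
/-- The setoid on vertices whose classes are the orbits `{x, α x}` of an involution `α`. -/
def orbitSetoid {V : Type*} (α : Equiv.Perm V) (hinv : ∀ x, α (α x) = x) : Setoid V where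
  r x y := y = x ∨ y = α x
  iseqv := by
    refine ⟨fun x => Or.inl rfl, ?_, ?_⟩
    · rintro x y (rfl | rfl)
      · exact Or.inl rfl
      · exact Or.inr (hinv x).symm
    · rintro x y z (rfl | rfl) (rfl | rfl)
      · exact Or.inl rfl
      · exact Or.inr rfl
      · exact Or.inr rfl
      · exact Or.inl (hinv x)

/-- The quotient graph `X/α` of a graph `X` by an involution `α` such that no vertex is
adjacent to its image: vertices are the orbits `{x, α x}`, two orbits being adjacent iff
some element of one is adjacent in `X` to some element of the other. -/
def quotGraph {V : Type*} (X : SimpleGraph V) (α : Equiv.Perm V)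
    (hinv : ∀ x, α (α x) = x) (hns : ∀ x, ¬ X.Adj x (α x)) :
    SimpleGraph (Quotient (orbitSetoid α hinv)) where
  Adj a b := ∃ x y, Quotient.mk (orbitSetoid α hinv) x = a ∧
    Quotient.mk (orbitSetoid α hinv) y = b ∧ X.Adj x y
  symm := by refine ⟨?_⟩; rintro a b ⟨x, y, hx, hy, h⟩; exact ⟨y, x, hy, hx, h.symm⟩
  loopless := by
    refine ⟨?_⟩
    rintro a ⟨x, y, hx, hy, h⟩
    rw [← hx] at hy
    rcases Quotient.exact hy with (h2 | h2)
    · subst h2; exact X.loopless.irrefl _ h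
    · subst h2; exact hns y (X.symm.symm _ _ h)

lemma fin2_eq : ∀ a b c : Fin 2, a ≠ b → c ≠ b → a = c := by decide

/-- pick the representative of the orbit `c` with color `e`. -/
noncomputable def pickRep {V : Type*} (ε : V → Fin 2) (β : Equiv.Perm V)
    (hβinv : ∀ x, β (β x) = x) (c : Quotient (orbitSetoid β hβinv)) (e : Fin 2) : V :=
  if ε c.out = e then c.out else β c.out

lemma pickRep_eps {V : Type*} (ε : V → Fin 2) (β : Equiv.Perm V)
    (hβinv : ∀ x, β (β x) = x) (hβodd : ∀ x, ε (β x) ≠ ε x)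
    (c : Quotient (orbitSetoid β hβinv)) (e : Fin 2) :
    ε (pickRep ε β hβinv c e) = e := by
  unfold pickRep
  split
  next h => exact h
  next h => exact fin2_eq _ _ _ (hβodd c.out) (Ne.symm h)

lemma pickRep_mk {V : Type*} (ε : V → Fin 2) (β : Equiv.Perm V)
    (hβinv : ∀ x, β (β x) = x)
    (c : Quotient (orbitSetoid β hβinv)) (e : Fin 2) :
    Quotient.mk (orbitSetoid β hβinv) (pickRep ε β hβinv c e) = c := by
  unfold pickRep
  split
  · exact c.out_eq
  · exact (Quotient.sound (Or.inr (hβinv c.out).symm)).trans c.out_eq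

lemma pickRep_beta {V : Type*} (ε : V → Fin 2) (β : Equiv.Perm V)
    (hβinv : ∀ x, β (β x) = x)
    (c : Quotient (orbitSetoid β hβinv)) (e e' : Fin 2) (hee : e ≠ e') :
    pickRep ε β hβinv c e' = β (pickRep ε β hβinv c e) := by
  unfold pickRep
  by_cases h : ε c.out = e
  · rw [if_pos h, if_neg (by rw [h]; exact hee)]
  · rw [if_neg h, if_pos (fin2_eq _ _ _ h (Ne.symm hee)), hβinv]

lemma pickRep_self {V : Type*} (ε : V → Fin 2) (β : Equiv.Perm V)
    (hβinv : ∀ x, β (β x) = x) (hβodd : ∀ x, ε (β x) ≠ ε x) (x : V) :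
    pickRep ε β hβinv (Quotient.mk (orbitSetoid β hβinv) x) (ε x) = x := by
  obtain h | h := Quotient.exact
      (Quotient.out_eq (Quotient.mk (orbitSetoid β hβinv) x))
  · unfold pickRep; rw [← h, if_pos rfl]
  · have h2 : (Quotient.mk (orbitSetoid β hβinv) x).out = β x := by
      conv_rhs => rw [h]
      exact (hβinv _).symm
    unfold pickRep
    rw [h2, if_neg (hβodd x), hβinv]

/-- Any conjugating automorphism can be corrected to an even one. -/
lemma conj_to_even_conj {V : Type*} (X : SimpleGraph V) (ε : V → Fin 2)
    (hε : ∀ a b, X.Adj a b → ε a ≠ ε b)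
    (α : Equiv.Perm V) (hαinv : ∀ x, α (α x) = x) (hαodd : ∀ x, ε (α x) ≠ ε x)
    (β : Equiv.Perm V) (hβaut : ∀ a b, X.Adj (β a) (β b) ↔ X.Adj a b)
    (hβinv : ∀ x, β (β x) = x) (hβodd : ∀ x, ε (β x) ≠ ε x)
    (f : Equiv.Perm V) (hfaut : ∀ a b, X.Adj (f a) (f b) ↔ X.Adj a b)
    (hconj : ∀ x, f (α x) = β (f x)) :
    ∃ g : Equiv.Perm V, (∀ a b, X.Adj (g a) (g b) ↔ X.Adj a b) ∧
      (∀ x, ε (g x) = ε x) ∧ ∀ x, g (α x) = β (g x) := by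
  classical
  set F : V → V := fun x => if ε (f x) = ε x then f x else β (f x) with hF
  -- color of F
  have hFeps : ∀ x, ε (F x) = ε x := by
    intro x
    by_cases h : ε (f x) = ε x
    · simp only [hF, if_pos h]; exact h
    · simp only [hF, if_neg h]
      exact fin2_eq _ _ _ (hβodd (f x)) (Ne.symm h)
  -- F conjugates α to β
  have hFconj : ∀ x, F (α x) = β (F x) := by
    intro x
    have h1 : ε (f (α x)) ≠ ε (f x) := by rw [hconj]; exact hβodd (f x)
    by_cases h : ε (f x) = ε x
    · have h2 : ε (f (α x)) = ε (α x) := by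
        refine fin2_eq _ _ _ (h ▸ h1) (hαodd x)
      simp only [hF, if_pos h, if_pos h2]
      exact hconj x
    · have h2 : ε (f (α x)) ≠ ε (α x) := by
        have h3 : ε (f (α x)) = ε x := fin2_eq _ _ _ h1 (Ne.symm h)
        rw [h3]; exact Ne.symm (hαodd x)
      simp only [hF, if_neg h, if_neg h2]
      rw [hconj]
  -- injectivity
  have hFinj : Function.Injective F := by
    intro x y hxy
    by_cases hx : ε (f x) = ε x <;> by_cases hy : ε (f y) = ε y
    · simp only [hF, if_pos hx, if_pos hy] at hxy; exact f.injective hxy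
    · simp only [hF, if_pos hx, if_neg hy] at hxy
      -- f x = β (f y) = f (α y), so x = α y, contradiction via colors
      exfalso
      rw [← hconj] at hxy
      have hxαy : x = α y := f.injective hxy
      have h1 : ε (f x) = ε y := by
        rw [hxαy, hconj]
        exact fin2_eq _ _ _ (hβodd (f y)) (Ne.symm hy)
      have h2 : ε (α y) = ε y := by rw [← hxαy]; exact hx.symm.trans h1
      exact hαodd y h2
    · simp only [hF, if_neg hx, if_pos hy] at hxy
      exfalso
      rw [← hconj] at hxy
      have hyαx : y = α x := f.injective hxy.symm
      have h1 : ε (f y) = ε x := by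
        rw [hyαx, hconj]
        exact fin2_eq _ _ _ (hβodd (f x)) (Ne.symm hx)
      have h2 : ε (α x) = ε x := by rw [← hyαx]; exact hy.symm.trans h1
      exact hαodd x h2
    · simp only [hF, if_neg hx, if_neg hy] at hxy
      exact f.injective (β.injective hxy)
  -- surjectivity
  have hFsurj : Function.Surjective F := by
    intro z
    by_cases h : ε z = ε (f.symm z)
    · refine ⟨f.symm z, ?_⟩
      simp only [hF, Equiv.apply_symm_apply]
      rw [if_pos h]
    · refine ⟨α (f.symm z), ?_⟩
      have hc : f (α (f.symm z)) = β z := by rw [hconj, Equiv.apply_symm_apply]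
      have h2 : ¬ ε (f (α (f.symm z))) = ε (α (f.symm z)) := by
        rw [hc]
        intro he
        have h3 : ε (β z) = ε (f.symm z) := fin2_eq _ _ _ (hβodd z) (Ne.symm h)
        exact hαodd (f.symm z) (he.symm.trans h3)
      simp only [hF, if_neg h2]
      rw [hc, hβinv]
  -- along an edge, membership in the "mixed" set is constant
  have key : ∀ p q r s : Fin 2, p ≠ q → r ≠ s → (r = p ↔ s = q) := by decide
  have hS : ∀ a b, X.Adj a b → (ε (f a) = ε a ↔ ε (f b) = ε b) := by
    intro a b hab
    exact key (ε a) (ε b) (ε (f a)) (ε (f b)) (hε _ _ hab) (hε _ _ ((hfaut a b).mpr hab))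
  have hFaut : ∀ a b, X.Adj (F a) (F b) ↔ X.Adj a b := by
    intro a b
    by_cases ha : ε (f a) = ε a <;> by_cases hb : ε (f b) = ε b
    · simp only [hF, if_pos ha, if_pos hb]; exact hfaut a b
    · simp only [hF, if_pos ha, if_neg hb]
      constructor
      · intro h
        rw [← hconj] at h
        have hab := (hfaut a (α b)).mp h
        have h3 := (hS a (α b) hab).mp ha
        rw [hconj] at h3
        have h4 : ε (β (f b)) = ε b := fin2_eq _ _ _ (hβodd (f b)) (Ne.symm hb)
        exact absurd (h4.symm.trans h3).symm (hαodd b)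
      · intro h
        exact absurd ((hS a b h).mp ha) hb
    · simp only [hF, if_neg ha, if_pos hb]
      constructor
      · intro h
        rw [← hconj] at h
        have hab := (hfaut (α a) b).mp h
        have h3 := (hS b (α a) hab.symm).mp hb
        rw [hconj] at h3
        have h4 : ε (β (f a)) = ε a := fin2_eq _ _ _ (hβodd (f a)) (Ne.symm ha)
        exact absurd (h4.symm.trans h3).symm (hαodd a)
      · intro h
        exact absurd ((hS a b h).mpr hb) ha
    · simp only [hF, if_neg ha, if_neg hb]
      exact (hβaut _ _).trans (hfaut a b)
  exact ⟨Equiv.ofBijective F ⟨hFinj, hFsurj⟩, hFaut, hFeps, hFconj⟩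

/-- A conjugating automorphism induces an isomorphism of quotient graphs. -/
lemma conj_to_iso {V : Type*} (X : SimpleGraph V)
    (α : Equiv.Perm V) (hαinv : ∀ x, α (α x) = x) (hαns : ∀ x, ¬ X.Adj x (α x))
    (β : Equiv.Perm V) (hβinv : ∀ x, β (β x) = x) (hβns : ∀ x, ¬ X.Adj x (β x))
    (f : Equiv.Perm V) (hfaut : ∀ a b, X.Adj (f a) (f b) ↔ X.Adj a b)
    (hconj : ∀ x, f (α x) = β (f x)) :
    Nonempty (quotGraph X α hαinv hαns ≃g quotGraph X β hβinv hβns) := by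
  have lifta : ∀ u a : V, Quotient.mk (orbitSetoid α hαinv) u = Quotient.mk (orbitSetoid α hαinv) a →
      Quotient.mk (orbitSetoid β hβinv) (f u) = Quotient.mk (orbitSetoid β hβinv) (f a) := by
    intro u a h
    obtain h1 | h1 := Quotient.exact h
    · rw [h1]
    · exact Quotient.sound (Or.inr (by rw [h1, hconj]))
  have liftb : ∀ u a : V, Quotient.mk (orbitSetoid β hβinv) u = Quotient.mk (orbitSetoid β hβinv) (f a) →
      Quotient.mk (orbitSetoid α hαinv) (f.symm u) = Quotient.mk (orbitSetoid α hαinv) a := by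
    intro u a h
    obtain h1 | h1 := Quotient.exact h
    · rw [← h1, Equiv.symm_apply_apply]
    · have h2 : u = β (f a) := by rw [h1, hβinv]
      rw [h2, ← hconj, Equiv.symm_apply_apply]
      exact (Quotient.sound (Or.inr rfl)).symm
  have hrel : ∀ a b : V, (orbitSetoid α hαinv) a b ↔ (orbitSetoid β hβinv) (f a) (f b) := by
    intro a b
    constructor
    · rintro (rfl | rfl)
      · exact Or.inl rfl
      · exact Or.inr (hconj a)
    · rintro (h | h)
      · exact Or.inl (f.injective h)
      · exact Or.inr (f.injective (h.trans (hconj a).symm))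
  refine ⟨⟨Quotient.congr f hrel, ?_⟩⟩
  intro a b
  induction a using Quotient.ind
  induction b using Quotient.ind
  rename_i a b
  show (quotGraph X β hβinv hβns).Adj
      (Quotient.mk (orbitSetoid β hβinv) (f a)) (Quotient.mk (orbitSetoid β hβinv) (f b)) ↔
    (quotGraph X α hαinv hαns).Adj
      (Quotient.mk (orbitSetoid α hαinv) a) (Quotient.mk (orbitSetoid α hαinv) b)
  constructor
  · rintro ⟨u, v, hu, hv, huv⟩
    refine ⟨f.symm u, f.symm v, ?_, ?_, ?_⟩
    · exact liftb u a hu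
    · exact liftb v b hv
    · rw [← hfaut, Equiv.apply_symm_apply, Equiv.apply_symm_apply]; exact huv
  · rintro ⟨u, v, hu, hv, huv⟩
    exact ⟨f u, f v, lifta u a hu, lifta v b hv, (hfaut u v).mpr huv⟩

/-- A quotient isomorphism lifts to an even conjugating automorphism. -/
lemma iso_to_even_conj {V : Type*} (X : SimpleGraph V) (ε : V → Fin 2)
    (hε : ∀ a b, X.Adj a b → ε a ≠ ε b)
    (α : Equiv.Perm V) (hαaut : ∀ a b, X.Adj (α a) (α b) ↔ X.Adj a b)
    (hαinv : ∀ x, α (α x) = x) (hαodd : ∀ x, ε (α x) ≠ ε x)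
    (hαns : ∀ x, ¬ X.Adj x (α x))
    (β : Equiv.Perm V) (hβaut : ∀ a b, X.Adj (β a) (β b) ↔ X.Adj a b)
    (hβinv : ∀ x, β (β x) = x) (hβodd : ∀ x, ε (β x) ≠ ε x)
    (hβns : ∀ x, ¬ X.Adj x (β x))
    (φ : quotGraph X α hαinv hαns ≃g quotGraph X β hβinv hβns) :
    ∃ f : Equiv.Perm V, (∀ a b, X.Adj (f a) (f b) ↔ X.Adj a b) ∧
      (∀ x, ε (f x) = ε x) ∧ ∀ x, f (α x) = β (f x) := by
  classical
  set f : V → V := fun x => pickRep ε β hβinv (φ (Quotient.mk (orbitSetoid α hαinv) x)) (ε x)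
    with hFdef
  set g : V → V := fun x =>
      pickRep ε α hαinv (φ.symm (Quotient.mk (orbitSetoid β hβinv) x)) (ε x) with hGdef
  have hfeps : ∀ x, ε (f x) = ε x := fun x => pickRep_eps ε β hβinv hβodd _ _
  have hgeps : ∀ x, ε (g x) = ε x := fun x => pickRep_eps ε α hαinv hαodd _ _
  have hfmk : ∀ x, Quotient.mk (orbitSetoid β hβinv) (f x) =
      φ (Quotient.mk (orbitSetoid α hαinv) x) := fun x => pickRep_mk ε β hβinv _ _
  have hgmk : ∀ x, Quotient.mk (orbitSetoid α hαinv) (g x) =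
      φ.symm (Quotient.mk (orbitSetoid β hβinv) x) := fun x => pickRep_mk ε α hαinv _ _
  have hgf : ∀ x, g (f x) = x := by
    intro x
    show pickRep ε α hαinv (φ.symm (Quotient.mk (orbitSetoid β hβinv) (f x))) (ε (f x)) = x
    rw [hfmk, hfeps, RelIso.symm_apply_apply]
    exact pickRep_self ε α hαinv hαodd x
  have hfg : ∀ x, f (g x) = x := by
    intro x
    show pickRep ε β hβinv (φ (Quotient.mk (orbitSetoid α hαinv) (g x))) (ε (g x)) = x
    rw [hgmk, hgeps, RelIso.apply_symm_apply]
    exact pickRep_self ε β hβinv hβodd x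
  have hfconj : ∀ x, f (α x) = β (f x) := by
    intro x
    show pickRep ε β hβinv (φ (Quotient.mk (orbitSetoid α hαinv) (α x))) (ε (α x)) = β (f x)
    have hmk : Quotient.mk (orbitSetoid α hαinv) (α x) = Quotient.mk (orbitSetoid α hαinv) x :=
      (Quotient.sound (Or.inr rfl)).symm
    rw [hmk]
    exact pickRep_beta ε β hβinv _ (ε x) (ε (α x)) (Ne.symm (hαodd x))
  have hf : ∀ a b, X.Adj a b → X.Adj (f a) (f b) := by
    intro a b h
    have hq : (quotGraph X β hβinv hβns).Adj
        (φ (Quotient.mk (orbitSetoid α hαinv) a)) (φ (Quotient.mk (orbitSetoid α hαinv) b)) :=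
      φ.map_rel_iff.mpr ⟨a, b, rfl, rfl, h⟩
    obtain ⟨u, v, hu, hv, huv⟩ := hq
    rw [← hfmk a] at hu
    rw [← hfmk b] at hv
    have hab := hε _ _ h
    obtain h1 | h1 := Quotient.exact hu <;> obtain h2 | h2 := Quotient.exact hv
    · rwa [← h1, ← h2] at huv
    · -- u = f a, v = β (f b) : color contradiction
      exfalso
      have hv2 : v = β (f b) := by rw [h2, hβinv]
      have hva : ε v = ε a := by
        rw [hv2]
        exact fin2_eq _ _ _ (hβodd (f b)) (by rw [hfeps]; exact hab)
      exact hε _ _ huv (by rw [← h1, hfeps, hva])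
    · exfalso
      have hu2 : u = β (f a) := by rw [h1, hβinv]
      have hub : ε u = ε b := by
        rw [hu2]
        exact fin2_eq _ _ _ (hβodd (f a)) (by rw [hfeps]; exact Ne.symm hab)
      exact hε _ _ huv (by rw [← h2, hfeps, hub])
    · have hu2 : u = β (f a) := by rw [h1, hβinv]
      have hv2 : v = β (f b) := by rw [h2, hβinv]
      rw [hu2, hv2] at huv
      exact (hβaut _ _).mp huv
  have hg : ∀ a b, X.Adj a b → X.Adj (g a) (g b) := by
    intro a b h
    have hq : (quotGraph X α hαinv hαns).Adj
        (φ.symm (Quotient.mk (orbitSetoid β hβinv) a))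
        (φ.symm (Quotient.mk (orbitSetoid β hβinv) b)) :=
      φ.symm.map_rel_iff.mpr ⟨a, b, rfl, rfl, h⟩
    obtain ⟨u, v, hu, hv, huv⟩ := hq
    rw [← hgmk a] at hu
    rw [← hgmk b] at hv
    have hab := hε _ _ h
    obtain h1 | h1 := Quotient.exact hu <;> obtain h2 | h2 := Quotient.exact hv
    · rwa [← h1, ← h2] at huv
    · exfalso
      have hv2 : v = α (g b) := by rw [h2, hαinv]
      have hva : ε v = ε a := by
        rw [hv2]
        exact fin2_eq _ _ _ (hαodd (g b)) (by rw [hgeps]; exact hab)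
      exact hε _ _ huv (by rw [← h1, hgeps, hva])
    · exfalso
      have hu2 : u = α (g a) := by rw [h1, hαinv]
      have hub : ε u = ε b := by
        rw [hu2]
        exact fin2_eq _ _ _ (hαodd (g a)) (by rw [hgeps]; exact Ne.symm hab)
      exact hε _ _ huv (by rw [← h2, hgeps, hub])
    · have hu2 : u = α (g a) := by rw [h1, hαinv]
      have hv2 : v = α (g b) := by rw [h2, hαinv]
      rw [hu2, hv2] at huv
      exact (hαaut _ _).mp huv
  refine ⟨⟨f, g, hgf, hfg⟩, fun a b => ⟨fun h => ?_, hf a b⟩, hfeps, hfconj⟩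
  simp only [Equiv.coe_fn_mk] at h
  have := hg _ _ h
  rwa [hgf, hgf] at this

/-- for odd involutions `α`, `β` of a bigraph `X` with simple quotients, the
following are equivalent: (1) `X/α ≅ X/β`; (2) `α` and `β` are evenly conjugate;
(3) `α` and `β` are conjugate. -/
theorem quot_iso_iff_conj {V : Type*} (X : SimpleGraph V) (ε : V → Fin 2)
    (hε : ∀ a b, X.Adj a b → ε a ≠ ε b)
    (α : Equiv.Perm V) (hαaut : ∀ a b, X.Adj (α a) (α b) ↔ X.Adj a b)
    (hαinv : ∀ x, α (α x) = x) (hαodd : ∀ x, ε (α x) ≠ ε x)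
    (hαns : ∀ x, ¬ X.Adj x (α x))
    (β : Equiv.Perm V) (hβaut : ∀ a b, X.Adj (β a) (β b) ↔ X.Adj a b)
    (hβinv : ∀ x, β (β x) = x) (hβodd : ∀ x, ε (β x) ≠ ε x)
    (hβns : ∀ x, ¬ X.Adj x (β x)) :
    (Nonempty (quotGraph X α hαinv hαns ≃g quotGraph X β hβinv hβns) ↔
      (∃ f : Equiv.Perm V, (∀ a b, X.Adj (f a) (f b) ↔ X.Adj a b) ∧
        (∀ x, ε (f x) = ε x) ∧ ∀ x, f (α x) = β (f x))) ∧
    ((∃ f : Equiv.Perm V, (∀ a b, X.Adj (f a) (f b) ↔ X.Adj a b) ∧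
        (∀ x, ε (f x) = ε x) ∧ ∀ x, f (α x) = β (f x)) ↔
      (∃ f : Equiv.Perm V, (∀ a b, X.Adj (f a) (f b) ↔ X.Adj a b) ∧
        ∀ x, f (α x) = β (f x))) := by
  constructor
  · constructor
    · rintro ⟨φ⟩
      exact iso_to_even_conj X ε hε α hαaut hαinv hαodd hαns β hβaut hβinv hβodd hβns φ
    · rintro ⟨f, hfaut, _, hconj⟩
      exact conj_to_iso X α hαinv hαns β hβinv hβns f hfaut hconj
  · constructor
    · rintro ⟨f, hfaut, _, hconj⟩
      exact ⟨f, hfaut, hconj⟩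
    · rintro ⟨f, hfaut, hconj⟩
      exact conj_to_even_conj X ε hε α hαinv hαodd β hβaut hβinv hβodd f hfaut hconj
end
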